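/- Given K×M complex matrices A^{(ij)} = E^{(ij)} + E^{(i+1,j+1)} for 1 ≤ i < K, 1 ≤ j < M, every linear combination T = Σ α_{ij} A^{(ij)} which has rank one must be zero; i.e., no such nonzero linear combination has rank exactly one. -/

import Mathlib

open Matrix Complex Kronecker Pointwise

/-- The Kronecker (tensor) product of two vectors. -/
def prodVec {K M : ℕ} (x : Fin K → ℂ) (y : Fin M → ℂ) : Fin K × Fin M → ℂ :=
  fun p => x p.1 * y p.2

/-- The product numerical range of an operator on `ℂ^K ⊗ ℂ^M`. -/
def pnr {K M : ℕ} (X : Matrix (Fin K × Fin M) (Fin K × Fin M) ℂ) : Set ℂ :=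
  {z | ∃ (x : Fin K → ℂ) (y : Fin M → ℂ),
    star x ⬝ᵥ x = 1 ∧ star y ⬝ᵥ y = 1 ∧
    star (prodVec x y) ⬝ᵥ X.mulVec (prodVec x y) = z}

/-- The numerical range of an operator on `ℂ^N`. -/
def nr {N : ℕ} (A : Matrix (Fin N) (Fin N) ℂ) : Set ℂ :=
  {z | ∃ x : Fin N → ℂ, star x ⬝ᵥ x = 1 ∧ star x ⬝ᵥ A.mulVec x = z}
section Helpers
open Polynomial

lemma rank_one_outer {m n : Type*} [Fintype m] [Fintype n] [DecidableEq m] [DecidableEq n]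
    (A : Matrix m n ℂ) (h : A.rank = 1) :
    ∃ u : m → ℂ, ∃ v : n → ℂ, (∀ p q, A p q = u p * v q) := by
  rw [Matrix.rank, finrank_eq_one_iff'] at h
  obtain ⟨⟨w, hw⟩, hw0, hall⟩ := h
  choose c hc using fun q : n =>
    hall ⟨A.mulVec (Pi.single q 1), LinearMap.mem_range.2 ⟨Pi.single q 1, rfl⟩⟩
  refine ⟨w, c, fun p q => ?_⟩
  have := congrArg (fun z : LinearMap.range A.mulVecLin => (z : m → ℂ) p) (hc q)
  simp only [Submodule.coe_smul, Pi.smul_apply, smul_eq_mul] at this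
  have h2 : (A.mulVec (Pi.single q 1)) p = A p q := by
    simp [Matrix.mulVec_single]
  rw [← h2, ← this]; ring

noncomputable def evalL (K M : ℕ) (s t : ℂ) :
    Matrix (Fin (K+1)) (Fin (M+1)) ℂ →ₗ[ℂ] ℂ where
  toFun A := ∑ p : Fin (K+1), ∑ q : Fin (M+1), s^(p:ℕ) * t^(q:ℕ) * A p q
  map_add' A B := by simp [Matrix.add_apply, mul_add, Finset.sum_add_distrib]
  map_smul' c A := by simp [Matrix.smul_apply, Finset.mul_sum, mul_left_comm]

lemma evalL_std (K M : ℕ) (s t : ℂ) (a : Fin (K+1)) (b : Fin (M+1)) :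
    evalL K M s t (Matrix.single a b (1:ℂ)) = s^(a:ℕ) * t^(b:ℕ) := by
  simp [evalL, Matrix.single, ite_and, Finset.sum_ite_eq]

lemma keysum (K M : ℕ) (α : Fin K → Fin M → ℂ) (s t : ℂ) (h : s * t = -1) :
    evalL K M s t (∑ i : Fin K, ∑ j : Fin M,
      α i j • (Matrix.single i.castSucc j.castSucc (1 : ℂ) +
        Matrix.single i.succ j.succ (1 : ℂ))) = 0 := by
  rw [map_sum]
  refine Finset.sum_eq_zero fun i _ => ?_
  rw [map_sum]
  refine Finset.sum_eq_zero fun j _ => ?_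
  rw [_root_.map_smul, map_add, evalL_std, evalL_std]
  simp only [Fin.coe_castSucc, Fin.val_succ, smul_eq_mul]
  have : s ^ ((i:ℕ)+1) * t ^ ((j:ℕ)+1) = (s*t) * (s^(i:ℕ) * t^(j:ℕ)) := by ring
  rw [this, h]; ring

theorem no_rank_one_combination (K M : ℕ) (α : Fin K → Fin M → ℂ) :
    Matrix.rank (∑ i : Fin K, ∑ j : Fin M,
      α i j • (Matrix.single i.castSucc j.castSucc (1 : ℂ) +
        Matrix.single i.succ j.succ (1 : ℂ))) ≠ 1 := by
  intro hr
  set T : Matrix (Fin (K+1)) (Fin (M+1)) ℂ := (∑ i : Fin K, ∑ j : Fin M,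
      α i j • (Matrix.single i.castSucc j.castSucc (1 : ℂ) +
        Matrix.single i.succ j.succ (1 : ℂ))) with hTdef
  obtain ⟨u, v, huv⟩ := rank_one_outer T hr
  have hT0 : T ≠ 0 := by
    intro h0
    rw [h0] at hr
    simp [Matrix.rank_zero] at hr
  set P : Polynomial ℂ := ∑ p : Fin (K+1), C (u p) * X^(p:ℕ) with hP
  set Q : Polynomial ℂ := ∑ q : Fin (M+1), C ((-1:ℂ)^(q:ℕ) * v q) * X^(M - (q:ℕ)) with hQ
  have hPQ : P * Q = 0 := by
    have hroot : ∀ s : ℂ, s ≠ 0 → (P * Q).eval s = 0 := by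
      intro s hs
      have hkey := keysum K M α s (-s⁻¹) (by field_simp)
      rw [← hTdef] at hkey
      have hsplit : evalL K M s (-s⁻¹) T
          = (∑ p : Fin (K+1), s^(p:ℕ) * u p) * (∑ q : Fin (M+1), (-s⁻¹)^(q:ℕ) * v q) := by
        rw [Finset.sum_mul_sum]
        simp only [evalL, LinearMap.coe_mk, AddHom.coe_mk]
        refine Finset.sum_congr rfl fun p _ => Finset.sum_congr rfl fun q _ => ?_
        rw [huv p q]; ring
      have hmul : (∑ p : Fin (K+1), s^(p:ℕ) * u p) * (∑ q : Fin (M+1), (-s⁻¹)^(q:ℕ) * v q) = 0 := by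
        rw [← hsplit]; exact hkey
      have hPe : P.eval s = ∑ p : Fin (K+1), s^(p:ℕ) * u p := by
        rw [hP]
        simp only [eval_finset_sum, eval_mul, eval_C, eval_pow, eval_X]
        exact Finset.sum_congr rfl fun p _ => mul_comm _ _
      have hQe : Q.eval s = s^M * ∑ q : Fin (M+1), (-s⁻¹)^(q:ℕ) * v q := by
        rw [hQ]
        simp only [eval_finset_sum, eval_mul, eval_C, eval_pow, eval_X, Finset.mul_sum]
        refine Finset.sum_congr rfl fun q _ => ?_
        have hq : (q:ℕ) ≤ M := Nat.lt_succ_iff.mp q.isLt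
        have : s ^ (M - (q:ℕ)) * s ^ (q:ℕ) = s ^ M := by
          rw [← pow_add, Nat.sub_add_cancel hq]
        have hpow : s ^ (M - (q:ℕ)) = s ^ M * (s⁻¹) ^ (q:ℕ) := by
          field_simp
          rw [← this, one_div, inv_pow, mul_assoc, mul_inv_cancel₀ (pow_ne_zero _ hs), mul_one]
        rw [hpow]
        rw [neg_pow, inv_pow]
        ring
      rw [eval_mul, hPe, hQe]
      rw [mul_comm (s^M) _, ← mul_assoc, hmul, zero_mul]
    have hinf : Set.Infinite {s : ℂ | (P*Q).IsRoot s} := by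
      apply Set.Infinite.mono (s := {(0:ℂ)}ᶜ)
      · intro s hs; exact hroot s hs
      · exact Set.Finite.infinite_compl (Set.finite_singleton 0)
    exact Polynomial.eq_zero_of_infinite_isRoot _ hinf
  have hTzero : T = 0 := by
    rcases mul_eq_zero.mp hPQ with h0 | h0
    · have hu : ∀ p, u p = 0 := by
        intro p
        have := congrArg (fun r => Polynomial.coeff r (p:ℕ)) h0
        simp only [hP, finset_sum_coeff, coeff_C_mul, coeff_X_pow, coeff_zero] at this
        rwa [Finset.sum_eq_single p (fun i _ hne => by
            rw [if_neg (fun hc => hne (Fin.val_injective hc.symm)), mul_zero])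
          (fun hp => absurd (Finset.mem_univ p) hp), if_pos rfl, mul_one] at this
      ext p q
      rw [huv p q, hu p, zero_mul, Matrix.zero_apply]
    · have hv : ∀ q, v q = 0 := by
        intro q
        have := congrArg (fun r => Polynomial.coeff r (M - (q:ℕ))) h0
        simp only [hQ, finset_sum_coeff, coeff_C_mul, coeff_X_pow, coeff_zero] at this
        have hinj : ∀ i : Fin (M+1), M - (i:ℕ) = M - (q:ℕ) → i = q := by
          intro i hi
          have hi' : (i:ℕ) ≤ M := Nat.lt_succ_iff.mp i.isLt
          have hq' : (q:ℕ) ≤ M := Nat.lt_succ_iff.mp q.isLt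
          have : (i:ℕ) = (q:ℕ) := by omega
          exact Fin.val_injective this
        rw [Finset.sum_eq_single q (fun i _ hne => by
            rw [if_neg (fun hc => hne (hinj i hc.symm)), mul_zero])
          (fun hp => absurd (Finset.mem_univ q) hp), if_pos rfl, mul_one] at this
        have := this
        rcases mul_eq_zero.mp this with h | h
        · exact absurd h (pow_ne_zero _ (by norm_num))
        · exact h
      ext p q
      rw [huv p q, hv q, mul_zero, Matrix.zero_apply]
  exact hT0 hTzero

end Helpers
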